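/- Let p ∈ ℚ[z₁,…,zₙ] be a polynomial of the form p = p₁(z₁) + p₂(z₂) + ⋯ + pₙ(zₙ), where each pᵢ is a univariate polynomial in the single variable zᵢ. If p depends on at least 3 variables (that is, ∂p/∂zᵢ ≠ 0 for at least three indices i), then p is irreducible in ℚ[z₁,…,zₙ]. -/

import Mathlib

open MvPolynomial


open MvPolynomial

lemma units_mv (m : ℕ) (u : MvPolynomial (Fin m) ℚ) (hu : IsUnit u) :
    ∃ c : ℚ, c ≠ 0 ∧ u = MvPolynomial.C c := by
  induction m with
  | zero =>
    obtain ⟨c, rfl⟩ := MvPolynomial.C_surjective (Fin 0) u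
    refine ⟨c, fun h0 => hu.ne_zero (by simp [h0]), rfl⟩
  | succ m ih =>
    have h1 : IsUnit (finSuccEquiv ℚ m u) := hu.map _
    rw [Polynomial.isUnit_iff] at h1
    obtain ⟨r, hr, hru⟩ := h1
    obtain ⟨c, hc, rfl⟩ := ih r hr
    refine ⟨c, hc, ?_⟩
    have h2 := congrArg (finSuccEquiv ℚ m).symm hru
    rw [AlgEquiv.symm_apply_apply] at h2
    rw [← h2]
    have h3 := RingHom.congr_fun (finSuccEquiv_comp_C_eq_C (R := ℚ) m) c
    simpa using h3

open MvPolynomial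

noncomputable def wsub {n : ℕ} (w : Fin n → ℕ) :
    MvPolynomial (Fin n) ℚ →ₐ[ℚ] Polynomial (MvPolynomial (Fin n) ℚ) :=
  aeval (fun i => Polynomial.C (MvPolynomial.X i) * Polynomial.X ^ (w i))

def wdeg {n : ℕ} (w : Fin n → ℕ) (e : Fin n →₀ ℕ) : ℕ := e.sum fun i k => w i * k

lemma wsub_monomial {n : ℕ} (w : Fin n → ℕ) (e : Fin n →₀ ℕ) (c : ℚ) :
    wsub w (monomial e c) =
      Polynomial.C (monomial e c) * Polynomial.X ^ (wdeg w e) := by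
  rw [wsub, aeval_monomial, wdeg]
  rw [Finsupp.prod_congr (g2 := fun i k => Polynomial.C (MvPolynomial.X i ^ k) * Polynomial.X ^ (w i * k)) (fun i _ => by rw [mul_pow, ← Polynomial.C_pow, ← pow_mul])]
  rw [Finsupp.prod_mul]
  have h1 : (e.prod fun i k => Polynomial.C (MvPolynomial.X (R := ℚ) i ^ k)) = Polynomial.C (e.prod fun i k => MvPolynomial.X i ^ k) := by
    rw [Finsupp.prod, Finsupp.prod, map_prod]
  have h2 : (e.prod fun i k => (Polynomial.X : Polynomial (MvPolynomial (Fin n) ℚ)) ^ (w i * k)) = Polynomial.X ^ (e.sum fun i k => w i * k) := by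
    rw [Finsupp.prod, Finsupp.sum, Finset.prod_pow_eq_pow_sum]
  rw [h1, h2, monomial_eq, Polynomial.algebraMap_apply, algebraMap_eq, map_mul]
  ring

lemma coeff_coeff_wsub {n : ℕ} (w : Fin n → ℕ) (f : MvPolynomial (Fin n) ℚ)
    (m : ℕ) (e : Fin n →₀ ℕ) :
    MvPolynomial.coeff e ((wsub w f).coeff m) =
      if wdeg w e = m then MvPolynomial.coeff e f else 0 := by
  induction f using MvPolynomial.induction_on' with
  | monomial e' c =>
    rw [wsub_monomial, Polynomial.coeff_C_mul, Polynomial.coeff_X_pow]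
    by_cases he : e' = e
    · subst he
      by_cases hm : wdeg w e' = m
      · simp [hm]
      · simp [hm, Ne.symm hm]
    · by_cases hm : m = wdeg w e'
      · simp [hm, coeff_monomial, he]
      · simp [hm, coeff_monomial, he]
  | add f g hf hg =>
    rw [map_add, Polynomial.coeff_add, MvPolynomial.coeff_add, hf, hg, MvPolynomial.coeff_add]
    split <;> simp

lemma eval_one_wsub {n : ℕ} (w : Fin n → ℕ) (f : MvPolynomial (Fin n) ℚ) :
    Polynomial.eval 1 (wsub w f) = f := by
  induction f using MvPolynomial.induction_on' with
  | monomial e c => rw [wsub_monomial]; simp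
  | add f g hf hg => rw [map_add, Polynomial.eval_add, hf, hg]

lemma wsub_ne_zero {n : ℕ} (w : Fin n → ℕ) (f : MvPolynomial (Fin n) ℚ) (hf : f ≠ 0) :
    wsub w f ≠ 0 := fun h => hf (by rw [← eval_one_wsub w f, h, Polynomial.eval_zero])

lemma wdeg_eq_zero {n : ℕ} {w : Fin n → ℕ} (hw : ∀ i, 1 ≤ w i) {e : Fin n →₀ ℕ}
    (h : wdeg w e = 0) : e = 0 := by
  ext i
  by_contra hi
  have hmem : i ∈ e.support := Finsupp.mem_support_iff.mpr (by simpa using hi)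
  have : w i * e i = 0 := by
    rw [wdeg, Finsupp.sum] at h
    exact Finset.sum_eq_zero_iff.mp h i hmem
  rcases Nat.mul_eq_zero.mp this with h1 | h2
  · exact absurd h1 (by have := hw i; omega)
  · exact hi (by simpa using h2)

lemma isUnit_of_isUnit_leadingCoeff {n : ℕ} {w : Fin n → ℕ} (hw : ∀ i, 1 ≤ w i)
    {f : MvPolynomial (Fin n) ℚ} (hf : f ≠ 0)
    (hu : IsUnit ((wsub w f).leadingCoeff)) : IsUnit f := by
  set Φf := wsub w f with hΦf
  have hΦne : Φf ≠ 0 := wsub_ne_zero w f hf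
  obtain ⟨c, hc, hCc⟩ := units_mv n _ hu
  have hlc : Φf.leadingCoeff ≠ 0 := Polynomial.leadingCoeff_ne_zero.mpr hΦne
  -- the leading coefficient is Φf.coeff D
  have hD0 : Φf.natDegree = 0 := by
    obtain ⟨e, he⟩ := MvPolynomial.ne_zero_iff.mp hlc
    have h1 : MvPolynomial.coeff e (Φf.coeff Φf.natDegree) ≠ 0 := he
    rw [hΦf, coeff_coeff_wsub] at h1
    have hwe : wdeg w e = Φf.natDegree := by
      by_contra hne; rw [if_neg hne] at h1; exact h1 rfl
    have he0 : e = 0 := by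
      have := he
      by_contra hne0
      have hCc' : Φf.leadingCoeff = MvPolynomial.C c := hCc
      rw [hCc', MvPolynomial.coeff_C, if_neg (fun hh => hne0 (by simp [← hh]))] at he
      exact he rfl
    rw [← hwe, he0]
    simp [wdeg]
  -- all nonzero-exponent coefficients of f vanish
  have hsupp : ∀ e : Fin n →₀ ℕ, e ≠ 0 → MvPolynomial.coeff e f = 0 := by
    intro e he
    have hpos : 0 < wdeg w e := by
      rcases Nat.eq_zero_or_pos (wdeg w e) with h0 | h
      · exact absurd (wdeg_eq_zero hw h0) he
      · exact h
    have hz : Φf.coeff (wdeg w e) = 0 :=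
      Polynomial.coeff_eq_zero_of_natDegree_lt (by omega)
    have := coeff_coeff_wsub w f (wdeg w e) e
    rw [hz, if_pos rfl] at this
    simpa using this.symm
  have hfC : f = MvPolynomial.C (MvPolynomial.coeff 0 f) := by
    ext e
    by_cases he : e = 0
    · subst he; simp
    · rw [hsupp e he, MvPolynomial.coeff_C, if_neg (fun hh => he hh.symm)]
  have hc0 : MvPolynomial.coeff 0 f ≠ 0 := fun h0 => hf (by rw [hfC, h0, map_zero])
  rw [hfC]
  exact (isUnit_iff_ne_zero.mpr hc0).map (MvPolynomial.C : ℚ →+* MvPolynomial (Fin n) ℚ)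



lemma pderiv_aeval_X {n : ℕ} (i j : Fin n) (f : Polynomial ℚ) :
    pderiv i (Polynomial.aeval (MvPolynomial.X j : MvPolynomial (Fin n) ℚ) f) =
      if i = j then Polynomial.aeval (MvPolynomial.X j : MvPolynomial (Fin n) ℚ)
        (Polynomial.derivative f) else 0 := by
  induction f using Polynomial.induction_on' with
  | add g h hg hh =>
    rw [map_add, map_add, hg, hh, map_add]
    split <;> simp
  | monomial k c =>
    rw [Polynomial.aeval_monomial, Polynomial.derivative_monomial, Polynomial.aeval_monomial]
    rw [show ((algebraMap ℚ (MvPolynomial (Fin n) ℚ)) c) = MvPolynomial.C c from rfl]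
    rw [show ((algebraMap ℚ (MvPolynomial (Fin n) ℚ)) (c * k)) = MvPolynomial.C (c * k) from rfl]
    rw [pderiv_C_mul, pderiv_pow, pderiv_X]
    by_cases hij : i = j
    · subst hij
      rw [if_pos rfl, Pi.single_eq_same, map_mul]
      rw [show (MvPolynomial.C (k : ℚ)) = ((k : MvPolynomial (Fin n) ℚ)) from by norm_cast]
      ring
    · rw [if_neg hij, Pi.single_eq_of_ne (fun hh => hij hh.symm) 1, mul_zero, mul_zero]

lemma retract_aeval {n : ℕ} (i : Fin n) (f : Polynomial ℚ) :
    MvPolynomial.aeval (fun j : Fin n => if j = i then Polynomial.X else (0 : Polynomial ℚ))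
      (Polynomial.aeval (MvPolynomial.X i : MvPolynomial (Fin n) ℚ) f) = f := by
  induction f using Polynomial.induction_on' with
  | add g h hg hh => rw [map_add, map_add, hg, hh]
  | monomial k c =>
    rw [Polynomial.aeval_monomial, map_mul, map_pow, aeval_X, if_pos rfl]
    rw [show ((algebraMap ℚ (MvPolynomial (Fin n) ℚ)) c) = MvPolynomial.C c from rfl, aeval_C]
    rw [← Polynomial.C_mul_X_pow_eq_monomial]
    rfl

lemma wsub_aeval {n : ℕ} (w : Fin n → ℕ) (i : Fin n) (f : Polynomial ℚ) :
    wsub w (Polynomial.aeval (MvPolynomial.X i : MvPolynomial (Fin n) ℚ) f) =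
      f.sum fun k c => Polynomial.C (MvPolynomial.C c * MvPolynomial.X i ^ k) *
        Polynomial.X ^ (w i * k) := by
  induction f using Polynomial.induction_on' with
  | add g h hg hh =>
    rw [map_add, map_add, hg, hh, Polynomial.sum_add_index]
    · intro k; rw [MvPolynomial.C_0, zero_mul, map_zero, zero_mul]
    · intro k b c; rw [MvPolynomial.C_add, add_mul, map_add, add_mul]
  | monomial k c =>
    rw [Polynomial.aeval_monomial,
      show ((algebraMap ℚ (MvPolynomial (Fin n) ℚ)) c) = MvPolynomial.C c from rfl,
      C_mul_X_pow_eq_monomial, wsub_monomial, Polynomial.sum_monomial_index]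
    · rw [← C_mul_X_pow_eq_monomial]
      congr 1
      rw [wdeg, Finsupp.sum_single_index]
      exact mul_zero _
    · rw [MvPolynomial.C_0, zero_mul, map_zero, zero_mul]



lemma eisenstein_core {σ : Type} (a₀ : ℚ) (ha₀ : a₀ ≠ 0) (d₀ : ℕ) (hd₀ : 1 ≤ d₀)
    (wp : MvPolynomial σ ℚ) (hw0 : wp ≠ 0) (hwu : ¬IsUnit wp)
    (hsq : ∀ π : MvPolynomial σ ℚ, Prime π → ¬ (π ^ 2 ∣ wp)) :
    Irreducible (Polynomial.C (MvPolynomial.C a₀) * Polynomial.X ^ d₀ + Polynomial.C wp) := by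
  classical
  have _hR : True := trivial
  set f : Polynomial (MvPolynomial σ ℚ) := Polynomial.C (MvPolynomial.C a₀) * Polynomial.X ^ d₀ + Polynomial.C wp with hf
  obtain ⟨π, hirr, hdvd⟩ := WfDvdMonoid.exists_irreducible_factor hwu hw0
  have hπ : Prime π := (UniqueFactorizationMonoid.irreducible_iff_prime).mp hirr
  have hCa : IsUnit (MvPolynomial.C a₀ : MvPolynomial σ ℚ) :=
    (isUnit_iff_ne_zero.mpr ha₀).map (MvPolynomial.C : ℚ →+* MvPolynomial σ ℚ)
  have hcoeff : ∀ m : ℕ, f.coeff m =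
      (if m = d₀ then MvPolynomial.C a₀ else 0) + (if m = 0 then wp else 0) := by
    intro m
    rw [hf, Polynomial.coeff_add, Polynomial.coeff_C_mul, Polynomial.coeff_X_pow,
      Polynomial.coeff_C, mul_ite, mul_one, mul_zero]
  have hcd₀ : f.coeff d₀ = MvPolynomial.C a₀ := by
    rw [hcoeff d₀, if_pos rfl, if_neg (by omega), add_zero]
  have hdeg : f.natDegree = d₀ := by
    apply le_antisymm
    · apply Polynomial.natDegree_le_iff_coeff_eq_zero.mpr
      intro m hm
      rw [hcoeff m, if_neg (by omega), if_neg (by omega), add_zero]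
    · exact Polynomial.le_natDegree_of_ne_zero (by rw [hcd₀]; exact hCa.ne_zero)
  set P : Ideal (MvPolynomial σ ℚ) := Ideal.span {π} with hP
  have hPprime : P.IsPrime := (Ideal.span_singleton_prime hπ.ne_zero).mpr hπ
  have heis : f.IsEisensteinAt P := by
    constructor
    · rw [Polynomial.leadingCoeff, hdeg, hcd₀]
      intro hmem
      exact hπ.not_unit (isUnit_of_dvd_unit (Ideal.mem_span_singleton.mp hmem) hCa)
    · intro m hm
      rw [hdeg] at hm
      rw [hcoeff m, if_neg (by omega)]
      by_cases h0 : m = 0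
      · rw [if_pos h0, zero_add]
        exact Ideal.mem_span_singleton.mpr hdvd
      · rw [if_neg h0, add_zero]; exact P.zero_mem
    · rw [hcoeff 0, if_neg (by omega), zero_add, if_pos rfl, hP, Ideal.span_singleton_pow]
      intro hmem
      exact hsq π hπ (Ideal.mem_span_singleton.mp hmem)
  apply heis.irreducible hPprime
  · intro r hr
    have : r ∣ MvPolynomial.C a₀ := by
      rw [← hcd₀]
      exact (Polynomial.C_dvd_iff_dvd_coeff r f).mp hr d₀
    exact isUnit_of_dvd_unit this hCa
  · omega



lemma prime_X_mv {σ : Type} [DecidableEq σ] (s : σ) :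
    Prime (MvPolynomial.X s : MvPolynomial σ ℚ) := by
  let Ψ := (renameEquiv ℚ (Equiv.optionSubtypeNe s).symm).trans
    (optionEquivLeft ℚ {t : σ // t ≠ s})
  have hX : Ψ (MvPolynomial.X s) = Polynomial.X := by
    simp only [Ψ, AlgEquiv.trans_apply, renameEquiv_apply, rename_X,
      Equiv.optionSubtypeNe_symm_self, optionEquivLeft_X_none]
  rw [← MulEquiv.prime_iff (Ψ : MvPolynomial σ ℚ ≃* Polynomial (MvPolynomial {t : σ // t ≠ s} ℚ))]
  show Prime (Ψ (MvPolynomial.X s))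
  rw [hX]
  exact Polynomial.prime_X

lemma dvd_pderiv_of_sq_dvd {σ : Type} [DecidableEq σ] {π wp : MvPolynomial σ ℚ}
    (h : π ^ 2 ∣ wp) (s : σ) : π ∣ pderiv s wp := by
  obtain ⟨u, rfl⟩ := h
  rw [pderiv_mul, pderiv_pow]
  refine dvd_add ⟨2 * π ^ (2 - 1 - 1) * pderiv s π * u, ?_⟩ ⟨π * pderiv s u, by ring⟩
  have : (2 : ℕ) - 1 = 1 := rfl
  rw [this]
  ring


lemma fermat_irreducible {n : ℕ} (T : Finset (Fin n)) (hT : 3 ≤ T.card)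
    (a : Fin n → ℚ) (d : Fin n → ℕ) (ha : ∀ i ∈ T, a i ≠ 0) (hd : ∀ i ∈ T, 1 ≤ d i) :
    Irreducible (∑ i ∈ T, MvPolynomial.C (a i) * MvPolynomial.X i ^ (d i)) := by
  classical
  obtain ⟨i₀, hi₀⟩ := Finset.card_pos.mp (lt_of_lt_of_le (by norm_num) hT)
  set σ' := {t : Fin n // t ≠ i₀} with hσ'
  set Ψ := (renameEquiv ℚ (Equiv.optionSubtypeNe i₀).symm).trans (optionEquivLeft ℚ σ') with hΨdef
  have hΨC : ∀ c : ℚ, Ψ (MvPolynomial.C c) = Polynomial.C (MvPolynomial.C c) := by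
    intro c
    simp only [hΨdef, AlgEquiv.trans_apply, renameEquiv_apply, rename_C, optionEquivLeft_C]
  have hΨX0 : Ψ (MvPolynomial.X i₀) = Polynomial.X := by
    simp only [hΨdef, AlgEquiv.trans_apply, renameEquiv_apply, rename_X,
      Equiv.optionSubtypeNe_symm_self, optionEquivLeft_X_none]
  have hΨXj : ∀ (j : Fin n) (hj : j ≠ i₀),
      Ψ (MvPolynomial.X j) = Polynomial.C (MvPolynomial.X (⟨j, hj⟩ : σ')) := by
    intro j hj
    simp only [hΨdef, AlgEquiv.trans_apply, renameEquiv_apply, rename_X,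
      Equiv.optionSubtypeNe_symm_of_ne hj, optionEquivLeft_X_some]
  -- ξ : total function picking the subtype variable
  set ξ : Fin n → MvPolynomial σ' ℚ := fun i => if h : i ≠ i₀ then MvPolynomial.X (⟨i, h⟩ : σ') else 0 with hξ
  set wp : MvPolynomial σ' ℚ := ∑ i ∈ T.erase i₀, MvPolynomial.C (a i) * (ξ i) ^ (d i) with hwp
  have hξmem : ∀ (i : Fin n) (hi : i ∈ T.erase i₀), ξ i = MvPolynomial.X (⟨i, Finset.ne_of_mem_erase hi⟩ : σ') := by
    intro i hi
    rw [hξ]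
    simp only [dif_pos (Finset.ne_of_mem_erase hi)]
  have himg : Ψ (∑ i ∈ T, MvPolynomial.C (a i) * MvPolynomial.X i ^ (d i)) =
      Polynomial.C (MvPolynomial.C (a i₀)) * Polynomial.X ^ (d i₀) + Polynomial.C wp := by
    rw [← Finset.add_sum_erase T _ hi₀, map_add, map_mul, map_pow, hΨC, hΨX0, map_sum]
    congr 1
    rw [hwp, map_sum (Polynomial.C : MvPolynomial σ' ℚ →+* Polynomial (MvPolynomial σ' ℚ))]
    apply Finset.sum_congr rfl
    intro i hi
    rw [map_mul, map_pow, hΨC, hΨXj i (Finset.ne_of_mem_erase hi), hξmem i hi,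
      ← Polynomial.C_pow, ← Polynomial.C_mul]
  -- pick two further elements j k
  have hcard2 : 1 < (T.erase i₀).card := by
    rw [Finset.card_erase_of_mem hi₀]; omega
  obtain ⟨j, hj, k, hk, hjk⟩ := Finset.one_lt_card.mp hcard2
  have hjT : j ∈ T := Finset.mem_of_mem_erase hj
  have hkT : k ∈ T := Finset.mem_of_mem_erase hk
  -- evaluation to one-variable polynomials
  have hev : ∀ (jj : Fin n), jj ∈ T.erase i₀ →
      (MvPolynomial.aeval (fun s : σ' => if s.1 = jj then (Polynomial.X : Polynomial ℚ) else 0)) wp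
        = Polynomial.C (a jj) * Polynomial.X ^ (d jj) := by
    intro jj hjj
    rw [hwp, map_sum]
    rw [Finset.sum_eq_single_of_mem jj hjj]
    · rw [map_mul, map_pow, hξmem jj hjj, aeval_X]
      simp only [if_pos]
      rw [aeval_C]
      norm_num
    · intro i hi hne
      rw [map_mul, map_pow, hξmem i hi, aeval_X, if_neg (by simpa using hne), zero_pow]
      · rw [mul_zero]
      · have := hd i (Finset.mem_of_mem_erase hi); omega
  have hw0 : wp ≠ 0 := by
    intro h0
    have := hev j hj
    rw [h0, map_zero] at this
    have hne : Polynomial.C (a j) * Polynomial.X ^ (d j) ≠ 0 :=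
      mul_ne_zero (by simpa using ha j hjT) (pow_ne_zero _ Polynomial.X_ne_zero)
    exact hne this.symm
  have hwu : ¬IsUnit wp := by
    intro hu
    have h2 : IsUnit (Polynomial.C (a j) * Polynomial.X ^ (d j)) := by
      rw [← hev j hj]; exact hu.map _
    obtain ⟨r, hr, hCr⟩ := Polynomial.isUnit_iff.mp h2
    have := congrArg Polynomial.natDegree hCr
    rw [Polynomial.natDegree_C, Polynomial.natDegree_C_mul_X_pow _ _ (ha j hjT)] at this
    have := hd j hjT
    omega
  have hsq : ∀ π : MvPolynomial σ' ℚ, Prime π → ¬ (π ^ 2 ∣ wp) := by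
    intro π hπ hdvd
    -- partial derivative of wp in direction jj
    have hpd : ∀ (jj : Fin n) (hjj : jj ∈ T.erase i₀),
        pderiv (⟨jj, Finset.ne_of_mem_erase hjj⟩ : σ') wp =
          (MvPolynomial.C (a jj) * (d jj : MvPolynomial σ' ℚ)) *
            (MvPolynomial.X (⟨jj, Finset.ne_of_mem_erase hjj⟩ : σ')) ^ (d jj - 1) := by
      intro jj hjj
      rw [hwp, map_sum, Finset.sum_eq_single_of_mem jj hjj]
      · rw [hξmem jj hjj, pderiv_C_mul, pderiv_pow, pderiv_X, Pi.single_eq_same]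
        ring
      · intro i hi hne
        rw [hξmem i hi, pderiv_C_mul, pderiv_pow, pderiv_X,
          Pi.single_eq_of_ne (by simpa [Subtype.ext_iff] using hne) 1]
        ring
    have hXdvd : ∀ (jj : Fin n) (hjj : jj ∈ T.erase i₀),
        π ∣ MvPolynomial.X (⟨jj, Finset.ne_of_mem_erase hjj⟩ : σ') := by
      intro jj hjj
      have h1 : π ∣ pderiv (⟨jj, Finset.ne_of_mem_erase hjj⟩ : σ') wp :=
        dvd_pderiv_of_sq_dvd hdvd _
      rw [hpd jj hjj] at h1
      have hunit : IsUnit (MvPolynomial.C (a jj) * (d jj : MvPolynomial σ' ℚ)) := by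
        have h3 : (MvPolynomial.C (a jj) * (d jj : MvPolynomial σ' ℚ)) =
            MvPolynomial.C (a jj * d jj) := by
          rw [map_mul]
          norm_cast
        rw [h3]
        refine (isUnit_iff_ne_zero.mpr ?_).map (MvPolynomial.C : ℚ →+* MvPolynomial σ' ℚ)
        have h4 := ha jj (Finset.mem_of_mem_erase hjj)
        have h5 := hd jj (Finset.mem_of_mem_erase hjj)
        have : (d jj : ℚ) ≠ 0 := by positivity
        exact mul_ne_zero h4 this
      obtain ⟨v, hv⟩ := hunit.exists_left_inv
      have h6 : π ∣ (MvPolynomial.X (⟨jj, Finset.ne_of_mem_erase hjj⟩ : σ')) ^ (d jj - 1) := by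
        obtain ⟨c, hc⟩ := h1
        refine ⟨v * c, ?_⟩
        calc (MvPolynomial.X (⟨jj, Finset.ne_of_mem_erase hjj⟩ : σ')) ^ (d jj - 1)
            = v * ((MvPolynomial.C (a jj) * (d jj : MvPolynomial σ' ℚ)) * (MvPolynomial.X (⟨jj, Finset.ne_of_mem_erase hjj⟩ : σ')) ^ (d jj - 1)) := by
              rw [← mul_assoc, hv, one_mul]
          _ = v * (π * c) := by rw [hc]
          _ = π * (v * c) := by ring
      exact hπ.dvd_of_dvd_pow (n := d jj - 1) <| by
        rcases eq_or_lt_of_le (hd jj (Finset.mem_of_mem_erase hjj)) with h7 | h7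
        · exfalso
          rw [← h7] at h6
          norm_num at h6
          exact hπ.not_unit (isUnit_of_dvd_one h6)
        · exact h6
    -- π divides two distinct variables: contradiction
    have haj := hXdvd j hj
    have hak := hXdvd k hk
    have hassocj := (hπ.associated_of_dvd (prime_X_mv _) haj)
    have hassock := (hπ.associated_of_dvd (prime_X_mv _) hak)
    have hXjk : (MvPolynomial.X (⟨j, Finset.ne_of_mem_erase hj⟩ : σ') : MvPolynomial σ' ℚ) ∣
        MvPolynomial.X (⟨k, Finset.ne_of_mem_erase hk⟩ : σ') :=
      (hassocj.symm.trans hassock).dvd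
    obtain ⟨c, hc⟩ := hXjk
    have := congrArg (MvPolynomial.aeval (fun s : σ' => if s.1 = j then (0 : ℚ) else 1)) hc
    rw [map_mul, aeval_X, aeval_X, if_pos rfl, if_neg (by simpa using hjk.symm), zero_mul] at this
    exact one_ne_zero this
  -- conclude by Eisenstein and transfer
  have hirr : Irreducible (Ψ (∑ i ∈ T, MvPolynomial.C (a i) * MvPolynomial.X i ^ (d i))) := by
    rw [himg]
    exact eisenstein_core (a i₀) (ha i₀ hi₀) (d i₀) (hd i₀ hi₀) wp hw0 hwu hsq
  exact (MulEquiv.irreducible_iff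
    (Ψ : MvPolynomial (Fin n) ℚ ≃* Polynomial (MvPolynomial σ' ℚ))).mp hirr

/-- A sum of univariate polynomials `p = p₁(z₁) + ⋯ + pₙ(zₙ)` over `ℚ`
that depends on at least 3 variables (i.e. `∂p/∂zᵢ ≠ 0` for at least three indices)
is irreducible in `ℚ[z₁,…,zₙ]`. -/
theorem stmt13 (n : ℕ) (q : Fin n → Polynomial ℚ) (p : MvPolynomial (Fin n) ℚ)
    (hp : p = ∑ i, Polynomial.aeval (MvPolynomial.X i) (q i))
    (h3 : 3 ≤ {i : Fin n | MvPolynomial.pderiv i p ≠ 0}.ncard) :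
    Irreducible p := by
  classical
  have hQ : ∀ i : Fin n, pderiv i p =
      Polynomial.aeval (MvPolynomial.X i : MvPolynomial (Fin n) ℚ)
        (Polynomial.derivative (q i)) := by
    intro i
    rw [hp, map_sum, Finset.sum_congr rfl (fun j _ => pderiv_aeval_X i j (q j))]
    simp
  set T : Finset (Fin n) :=
    Finset.univ.filter (fun i => Polynomial.derivative (q i) ≠ 0) with hTdef
  have hTmem : ∀ i, i ∈ T ↔ pderiv i p ≠ 0 := by
    intro i
    rw [hTdef, Finset.mem_filter]
    constructor
    · rintro ⟨-, hne⟩ h0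
      apply hne
      rw [hQ i] at h0
      have := retract_aeval i (Polynomial.derivative (q i))
      rw [h0, map_zero] at this
      exact this.symm
    · intro hne
      refine ⟨Finset.mem_univ i, fun h0 => hne ?_⟩
      rw [hQ i, h0, map_zero]
  have hT3 : 3 ≤ T.card := by
    have hset : {i : Fin n | MvPolynomial.pderiv i p ≠ 0} = ↑T := by
      ext i
      simp only [Set.mem_setOf_eq, Finset.mem_coe]
      exact (hTmem i).symm
    rwa [hset, Set.ncard_coe_finset] at h3
  set dd : Fin n → ℕ := fun i => (q i).natDegree with hdd
  have hder : ∀ i ∈ T, Polynomial.derivative (q i) ≠ 0 := by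
    intro i hi; rw [hTdef, Finset.mem_filter] at hi; exact hi.2
  have hq0 : ∀ i ∈ T, q i ≠ 0 := by
    intro i hi h0; exact hder i hi (by rw [h0, map_zero])
  have hd1 : ∀ i ∈ T, 1 ≤ dd i := by
    intro i hi
    by_contra hlt
    have h0 : dd i = 0 := by omega
    obtain ⟨c, hc⟩ := Polynomial.natDegree_eq_zero.mp (show (q i).natDegree = 0 from h0)
    exact hder i hi (by rw [← hc, Polynomial.derivative_C])
  have hlc : ∀ i ∈ T, (q i).coeff (dd i) ≠ 0 := by
    intro i hi
    exact Polynomial.leadingCoeff_ne_zero.mpr (hq0 i hi)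
  have hqcz : ∀ i, i ∉ T → dd i = 0 := by
    intro i hi
    rw [hTdef, Finset.mem_filter, not_and, not_not] at hi
    exact Polynomial.natDegree_eq_zero_of_derivative_eq_zero (hi (Finset.mem_univ i))
  set M : ℕ := ∏ i ∈ T, dd i with hM
  have hM1 : 1 ≤ M := Finset.one_le_prod' hd1
  set w : Fin n → ℕ := fun i => if i ∈ T then M / dd i else 1 with hw
  have hwd : ∀ i ∈ T, w i * dd i = M := by
    intro i hi
    rw [hw]
    simp only [if_pos hi]
    exact Nat.div_mul_cancel (Finset.dvd_prod_of_mem dd hi)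
  have hw1 : ∀ i, 1 ≤ w i := by
    intro i
    rw [hw]
    by_cases hi : i ∈ T
    · simp only [if_pos hi]
      have hdvd : dd i ∣ M := Finset.dvd_prod_of_mem dd hi
      have : dd i ≤ M := Nat.le_of_dvd (by omega) hdvd
      have := hd1 i hi
      rw [Nat.one_le_div_iff (by omega)]
      exact ‹dd i ≤ M›
    · simp [if_neg hi]
  set hpoly : MvPolynomial (Fin n) ℚ :=
    ∑ i ∈ T, MvPolynomial.C ((q i).coeff (dd i)) * MvPolynomial.X i ^ (dd i) with hhp
  -- the coefficient of X^M in (wsub w) p is hpoly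
  have hterm : ∀ i : Fin n, ((wsub w) (Polynomial.aeval (MvPolynomial.X i) (q i))).coeff M =
      if i ∈ T then MvPolynomial.C ((q i).coeff (dd i)) * MvPolynomial.X i ^ dd i else 0 := by
    intro i
    rw [wsub_aeval, Polynomial.sum, Polynomial.finset_sum_coeff]
    by_cases hiT : i ∈ T
    · rw [if_pos hiT,
        Finset.sum_eq_single_of_mem (dd i)
          (Polynomial.natDegree_mem_support_of_nonzero (hq0 i hiT))]
      · rw [Polynomial.coeff_C_mul, Polynomial.coeff_X_pow, if_pos (hwd i hiT).symm, mul_one]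
      · intro k hk hkne
        rw [Polynomial.coeff_C_mul, Polynomial.coeff_X_pow, if_neg, mul_zero]
        intro hMk
        have hkle : k ≤ dd i := Polynomial.le_natDegree_of_mem_supp k hk
        have hklt : k < dd i := lt_of_le_of_ne hkle hkne
        have : w i * k < w i * dd i := mul_lt_mul_of_pos_left hklt (by have := hw1 i; omega)
        rw [hwd i hiT] at this
        omega
    · rw [if_neg hiT]
      apply Finset.sum_eq_zero
      intro k hk
      have hkle : k ≤ dd i := Polynomial.le_natDegree_of_mem_supp k hk
      rw [hqcz i hiT] at hkle
      rw [Polynomial.coeff_C_mul, Polynomial.coeff_X_pow, if_neg, mul_zero]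
      intro hMk
      rw [hMk] at hM1
      have : k = 0 := by omega
      rw [this, mul_zero] at hM1
      omega
  have hcoeffM : ((wsub w) p).coeff M = hpoly := by
    rw [hp, map_sum, Polynomial.finset_sum_coeff,
      Finset.sum_congr rfl (fun i _ => hterm i), hhp]
    rw [Finset.sum_ite_mem Finset.univ T _, Finset.univ_inter]
  have hdegle : ((wsub w) p).natDegree ≤ M := by
    rw [hp, map_sum]
    apply Polynomial.natDegree_sum_le_of_forall_le
    intro i _
    rw [wsub_aeval, Polynomial.sum]
    apply Polynomial.natDegree_sum_le_of_forall_le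
    intro k hk
    refine (Polynomial.natDegree_C_mul_le _ _).trans ?_
    rw [Polynomial.natDegree_X_pow]
    have hkle : k ≤ dd i := Polynomial.le_natDegree_of_mem_supp k hk
    by_cases hiT : i ∈ T
    · have : w i * k ≤ w i * dd i := Nat.mul_le_mul_left _ hkle
      rw [hwd i hiT] at this
      exact this
    · rw [hqcz i hiT] at hkle
      have : k = 0 := by omega
      rw [this, mul_zero]
      omega
  -- hpoly is nonzero
  obtain ⟨j0, hj0⟩ := Finset.card_pos.mp (lt_of_lt_of_le (by norm_num) hT3)
  have hpne : hpoly ≠ 0 := by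
    intro h0
    have hev := congrArg (MvPolynomial.aeval
      (fun s : Fin n => if s = j0 then (Polynomial.X : Polynomial ℚ) else 0)) h0
    rw [hhp, map_sum, map_zero, Finset.sum_eq_single_of_mem j0 hj0] at hev
    · rw [map_mul, map_pow, aeval_X, if_pos rfl, aeval_C] at hev
      have hne2 : (algebraMap ℚ (Polynomial ℚ)) ((q j0).coeff (dd j0)) *
          Polynomial.X ^ dd j0 ≠ 0 := by
        apply mul_ne_zero
        · simpa using hlc j0 hj0
        · exact pow_ne_zero _ Polynomial.X_ne_zero
      exact hne2 hev
    · intro i hi hne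
      rw [map_mul, map_pow, aeval_X, if_neg hne, zero_pow, mul_zero]
      have := hd1 i hi
      omega
  have hndeg : ((wsub w) p).natDegree = M :=
    le_antisymm hdegle (Polynomial.le_natDegree_of_ne_zero (by rw [hcoeffM]; exact hpne))
  have hlcp : ((wsub w) p).leadingCoeff = hpoly := by
    rw [show ((wsub w) p).leadingCoeff = ((wsub w) p).coeff (((wsub w) p).natDegree) from rfl,
      hndeg, hcoeffM]
  have hirr : Irreducible hpoly := by
    rw [hhp]
    exact fermat_irreducible T hT3 _ dd hlc hd1
  have hp0 : p ≠ 0 := by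
    intro h0
    rw [h0, map_zero] at hlcp
    exact hpne (by rw [← hlcp, Polynomial.leadingCoeff_zero])
  constructor
  · intro hu
    obtain ⟨c, hc, hpc⟩ := units_mv n p hu
    have := (hTmem j0).mp hj0
    apply this
    rw [hpc, pderiv_C]
  · intro F G hFG
    have hF0 : F ≠ 0 := by
      rintro rfl
      rw [zero_mul] at hFG
      exact hp0 hFG
    have hG0 : G ≠ 0 := by
      rintro rfl
      rw [mul_zero] at hFG
      exact hp0 hFG
    have hfac : hpoly = ((wsub w) F).leadingCoeff * ((wsub w) G).leadingCoeff := by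
      rw [← Polynomial.leadingCoeff_mul, ← map_mul, ← hFG, hlcp]
    rcases hirr.isUnit_or_isUnit hfac with h | h
    · exact Or.inl (isUnit_of_isUnit_leadingCoeff hw1 hF0 h)
    · exact Or.inr (isUnit_of_isUnit_leadingCoeff hw1 hG0 h)
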